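/- (Partitioned fundamental lemma) Let (A, B, C, D) be a discrete-time LTI system with state dimension n and controllable pair (A, B). Let (u^d, y^d) be a length-T input/output trajectory with u^d persistently exciting of order T_ini + N + n. Partition the Hankel matrices as col(U_p, U_f) = H_{T_ini+N}(u^d) and col(Y_p, Y_f) = H_{T_ini+N}(y^d), where U_p consists of the first m·T_ini rows and U_f of the last m·N rows (and analogously Y_p, Y_f with m replaced by p). Then for sequences u_ini ∈ (R^m)^{T_ini}, u ∈ (R^m)^N, y_ini ∈ (R^p)^{T_ini}, y ∈ (R^p)^N, the concatenation col(u_ini, u, y_ini, y) forms a length-(T_ini + N) input/output trajectory of the system (input sequence u_ini followed by u, output sequence y_ini followed by y) if and only if there exists g ∈ R^{T−T_ini−N+1} with U_p g = u_ini, Y_p g = y_ini, U_f g = u, Y_f g = y. -/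

import Mathlib

open Matrix

noncomputable section

/-- `(u, y)` is a length-`L` input/output trajectory of the discrete-time LTI system
`(A, B, C, D)`: there is a state sequence `x` with `x(k+1) = A x(k) + B u(k)` and
`y(k) = C x(k) + D u(k)` for `k = 0, …, L-1`. -/
def IsTrajectory {n m p : ℕ} (A : Matrix (Fin n) (Fin n) ℝ) (B : Matrix (Fin n) (Fin m) ℝ)
    (C : Matrix (Fin p) (Fin n) ℝ) (D : Matrix (Fin p) (Fin m) ℝ) {L : ℕ}
    (u : Fin L → Fin m → ℝ) (y : Fin L → Fin p → ℝ) : Prop :=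
  ∃ x : Fin (L + 1) → Fin n → ℝ, ∀ k : Fin L,
    x k.succ = A.mulVec (x k.castSucc) + B.mulVec (u k) ∧
    y k = C.mulVec (x k.castSucc) + D.mulVec (u k)

/-- The block Hankel matrix `H_l(ω) ∈ ℝ^{ql × (T-l+1)}` of depth `l` of a length-`T`
sequence `ω` with values in `ℝ^q`; rows are indexed by `Fin l × Fin q`, and the
`(i, j)` block entry is `ω (i + j)` (0-indexed). -/
def hankel {q T : ℕ} (l : ℕ) (hl : l ≤ T) (ω : Fin T → Fin q → ℝ) :
    Matrix (Fin l × Fin q) (Fin (T - l + 1)) ℝ :=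
  Matrix.of fun iq j =>
    ω ⟨(iq.1 : ℕ) + (j : ℕ), by have := iq.1.isLt; have := j.isLt; omega⟩ iq.2

/-- The controllability matrix `[B, AB, …, A^{n-1}B]`. -/
def ctrbMat {n : ℕ} {q : Type*} [Fintype q] (A : Matrix (Fin n) (Fin n) ℝ)
    (B : Matrix (Fin n) q ℝ) : Matrix (Fin n) (Fin n × q) ℝ :=
  Matrix.of fun r kj => (A ^ (kj.1 : ℕ) * B) r kj.2

/-- The order-`l` observability matrix `col(C, CA, …, CA^{l-1})`. -/
def obsvMat {n p : ℕ} (l : ℕ) (A : Matrix (Fin n) (Fin n) ℝ)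
    (C : Matrix (Fin p) (Fin n) ℝ) : Matrix (Fin l × Fin p) (Fin n) ℝ :=
  Matrix.of fun kr c => (C * A ^ (kr.1 : ℕ)) kr.2 c

/-- Concatenation of a length-`Ti` sequence followed by a length-`N` sequence. -/
def catSeq {α : Type*} {Ti N : ℕ} (a : Fin Ti → α) (b : Fin N → α) : Fin (Ti + N) → α :=
  fun k => if h : (k : ℕ) < Ti then a ⟨k, h⟩ else b ⟨(k : ℕ) - Ti, by have := k.isLt; omega⟩

end

open Finset
/-- Full row rank implies trivial left kernel. -/
lemma aux_leftker {R C : Type*} [Fintype R] [Fintype C] (M : Matrix R C ℝ)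
    (h : M.rank = Fintype.card R) : ∀ v : R → ℝ, v ᵥ* M = 0 → v = 0 := by
  intro v hv
  have h1 : (Mᵀ).rank = Fintype.card R := by rw [Matrix.rank_transpose]; exact h
  have h2 : LinearMap.ker (Mᵀ).mulVecLin = ⊥ := by
    have h3 := LinearMap.finrank_range_add_finrank_ker (Mᵀ).mulVecLin
    rw [Module.finrank_fintype_fun_eq_card] at h3
    have h4 : Module.finrank ℝ (LinearMap.ker (Mᵀ).mulVecLin) = 0 := by
      have h5 := h1
      unfold Matrix.rank at h5
      omega
    exact Submodule.finrank_eq_zero.mp h4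
  have h6 : (Mᵀ).mulVecLin v = 0 := by
    rw [Matrix.mulVecLin_apply, Matrix.mulVec_transpose]; exact hv
  exact LinearMap.ker_eq_bot.mp h2 (by simpa using h6)

/-- Trivial left kernel implies surjectivity of `mulVec`. -/
lemma aux_surj {R C : Type*} [Fintype R] [Fintype C] (M : Matrix R C ℝ)
    (h : ∀ v : R → ℝ, v ᵥ* M = 0 → v = 0) : Function.Surjective M.mulVec := by
  have hinj : Function.Injective (Mᵀ).mulVecLin := by
    rw [← LinearMap.ker_eq_bot, LinearMap.ker_eq_bot']
    intro v hv
    exact h v (by rw [← Matrix.mulVec_transpose]; exact hv)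
  have hrk : (Mᵀ).rank = Fintype.card R := by
    unfold Matrix.rank
    rw [LinearMap.finrank_range_of_inj hinj, Module.finrank_fintype_fun_eq_card]
  have hrM : M.rank = Fintype.card R := by rw [← Matrix.rank_transpose]; exact hrk
  have htop : LinearMap.range M.mulVecLin = ⊤ := by
    apply Submodule.eq_top_of_finrank_eq
    rw [Module.finrank_fintype_fun_eq_card]
    exact hrM
  intro w
  obtain ⟨g, hg⟩ := (LinearMap.range_eq_top.mp htop) w
  exact ⟨g, by simpa using hg⟩

/-- Cayley–Hamilton, in the form we need. -/
lemma aux_cayley {n : ℕ} (A : Matrix (Fin n) (Fin n) ℝ) :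
    ∃ c : ℕ → ℝ, A ^ n = ∑ τ ∈ range n, c τ • A ^ τ := by
  refine ⟨fun τ => -(A.charpoly.coeff τ), ?_⟩
  have hdeg : A.charpoly.natDegree = n := by
    rw [Matrix.charpoly_natDegree_eq_dim, Fintype.card_fin]
  have h0 := Matrix.aeval_self_charpoly A
  rw [Polynomial.aeval_eq_sum_range, hdeg, Finset.sum_range_succ] at h0
  have hlead : A.charpoly.coeff n = 1 := by
    have hm := A.charpoly_monic
    rw [Polynomial.Monic, Polynomial.leadingCoeff, hdeg] at hm
    exact hm
  rw [hlead, one_smul] at h0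
  have h1 : A ^ n = -∑ i ∈ range n, A.charpoly.coeff i • A ^ i := by
    linear_combination (norm := abel) h0
  rw [h1, ← Finset.sum_neg_distrib]
  exact Finset.sum_congr rfl fun τ _ => (neg_smul _ _).symm

lemma aux_sum_mulVec {ι R C : Type*} [Fintype C] (s : Finset ι)
    (f : ι → Matrix R C ℝ) (x : C → ℝ) :
    (∑ i ∈ s, f i) *ᵥ x = ∑ i ∈ s, f i *ᵥ x := by
  ext r
  simp only [Matrix.mulVec, dotProduct, Finset.sum_apply, Matrix.sum_apply,
    Finset.sum_mul]
  rw [Finset.sum_comm]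


lemma aux_mulVec_sum {R C ι : Type*} [Fintype C] (M : Matrix R C ℝ) (s : Finset ι)
    (w : ι → C → ℝ) : M *ᵥ (∑ i ∈ s, w i) = ∑ i ∈ s, M *ᵥ w i := by
  have h := map_sum M.mulVecLin w s
  simp only [Matrix.mulVecLin_apply] at h
  exact h

lemma aux_dot_sum {C ι : Type*} [Fintype C] (s : Finset ι) (v : C → ℝ) (w : ι → C → ℝ) :
    v ⬝ᵥ (∑ i ∈ s, w i) = ∑ i ∈ s, v ⬝ᵥ w i := by
  simp only [dotProduct, Finset.sum_apply, Finset.mul_sum]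
  rw [Finset.sum_comm]

lemma aux_sum_dot {C ι : Type*} [Fintype C] (s : Finset ι) (v : C → ℝ) (w : ι → C → ℝ) :
    (∑ i ∈ s, w i) ⬝ᵥ v = ∑ i ∈ s, w i ⬝ᵥ v := by
  simp only [dotProduct, Finset.sum_apply, Finset.sum_mul]
  rw [Finset.sum_comm]

/-- **partitioned fundamental lemma.** Partition the depth-`(T_ini+N)`
Hankel matrices of `(u^d, y^d)` into past blocks (`U_p`, `Y_p`: first `T_ini` block
rows) and future blocks (`U_f`, `Y_f`: last `N` block rows).  Under controllability
of `(A,B)` and persistency of excitation of `u^d` of order `T_ini + N + n`, the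
concatenation `col(u_ini, u, y_ini, y)` is a length-`(T_ini+N)` trajectory of the
system iff there is `g` with `U_p g = u_ini`, `Y_p g = y_ini`, `U_f g = u`, `Y_f g = y`. -/
theorem partitioned_fundamental_lemma
    (n m p T Tini N : ℕ) (hT : Tini + N ≤ T) (hTpe : Tini + N + n ≤ T)
    (A : Matrix (Fin n) (Fin n) ℝ) (B : Matrix (Fin n) (Fin m) ℝ)
    (C : Matrix (Fin p) (Fin n) ℝ) (D : Matrix (Fin p) (Fin m) ℝ)
    (hctrb : (ctrbMat A B).rank = n)
    (ud : Fin T → Fin m → ℝ) (yd : Fin T → Fin p → ℝ)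
    (htraj : IsTrajectory A B C D ud yd)
    (hPE : (hankel (Tini + N + n) hTpe ud).rank = m * (Tini + N + n))
    (uini : Fin Tini → Fin m → ℝ) (u : Fin N → Fin m → ℝ)
    (yini : Fin Tini → Fin p → ℝ) (y : Fin N → Fin p → ℝ) :
    IsTrajectory A B C D (catSeq uini u) (catSeq yini y) ↔
      ∃ g : Fin (T - (Tini + N) + 1) → ℝ,
        (∀ (k : Fin Tini) (i : Fin m),
          (hankel (Tini + N) hT ud).mulVec g
            (⟨(k : ℕ), by have := k.isLt; omega⟩, i) = uini k i) ∧
        (∀ (k : Fin Tini) (i : Fin p),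
          (hankel (Tini + N) hT yd).mulVec g
            (⟨(k : ℕ), by have := k.isLt; omega⟩, i) = yini k i) ∧
        (∀ (k : Fin N) (i : Fin m),
          (hankel (Tini + N) hT ud).mulVec g
            (⟨Tini + (k : ℕ), by have := k.isLt; omega⟩, i) = u k i) ∧
        (∀ (k : Fin N) (i : Fin p),
          (hankel (Tini + N) hT yd).mulVec g
            (⟨Tini + (k : ℕ), by have := k.isLt; omega⟩, i) = y k i) := by
  obtain ⟨xd, hxd⟩ := htraj
  set Ud : ℕ → Fin m → ℝ := fun k => if h : k < T then ud ⟨k, h⟩ else 0 with hUdDef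
  set Yd : ℕ → Fin p → ℝ := fun k => if h : k < T then yd ⟨k, h⟩ else 0 with hYdDef
  set Xd : ℕ → Fin n → ℝ := fun k => if h : k < T + 1 then xd ⟨k, h⟩ else 0 with hXdDef
  have hUd : ∀ k (h : k < T), Ud k = ud ⟨k, h⟩ := fun k h => dif_pos h
  have hYd : ∀ k (h : k < T), Yd k = yd ⟨k, h⟩ := fun k h => dif_pos h
  have hXd : ∀ k (h : k < T + 1), Xd k = xd ⟨k, h⟩ := fun k h => dif_pos h
  have hrec : ∀ k, k < T → Xd (k + 1) = A *ᵥ Xd k + B *ᵥ Ud k := by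
    intro k hk
    rw [hXd (k + 1) (by omega), hXd k (by omega), hUd k hk]
    simpa [Fin.succ_mk, Fin.castSucc_mk] using (hxd ⟨k, hk⟩).1
  have hout : ∀ k, k < T → Yd k = C *ᵥ Xd k + D *ᵥ Ud k := by
    intro k hk
    rw [hYd k hk, hXd k (by omega), hUd k hk]
    simpa [Fin.castSucc_mk] using (hxd ⟨k, hk⟩).2
  -- Hankel matrix entries in terms of the ℕ-extended data
  have hHu : ∀ (g : Fin (T - (Tini + N) + 1) → ℝ) (k : Fin (Tini + N)) (i : Fin m),
      (hankel (Tini + N) hT ud *ᵥ g) (k, i)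
        = ∑ j : Fin (T - (Tini + N) + 1), g j * Ud ((k : ℕ) + (j : ℕ)) i := by
    intro g k i
    show (∑ j, hankel (Tini + N) hT ud (k, i) j * g j) = _
    refine Finset.sum_congr rfl fun j _ => ?_
    rw [hUd ((k : ℕ) + (j : ℕ)) (by have hk := k.isLt; have hj := j.isLt; omega)]
    show ud _ i * g j = g j * ud _ i
    ring
  have hHy : ∀ (g : Fin (T - (Tini + N) + 1) → ℝ) (k : Fin (Tini + N)) (i : Fin p),
      (hankel (Tini + N) hT yd *ᵥ g) (k, i)
        = ∑ j : Fin (T - (Tini + N) + 1), g j * Yd ((k : ℕ) + (j : ℕ)) i := by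
    intro g k i
    show (∑ j, hankel (Tini + N) hT yd (k, i) j * g j) = _
    refine Finset.sum_congr rfl fun j _ => ?_
    rw [hYd ((k : ℕ) + (j : ℕ)) (by have hk := k.isLt; have hj := j.isLt; omega)]
    show yd _ i * g j = g j * yd _ i
    ring
  -- the candidate state built from g
  set z : (Fin (T - (Tini + N) + 1) → ℝ) → ℕ → Fin n → ℝ :=
    fun g k r => ∑ j : Fin (T - (Tini + N) + 1), g j * Xd (k + (j : ℕ)) r with hzDef
  have hz1 : ∀ (g : Fin (T - (Tini + N) + 1) → ℝ) (k : ℕ) (hk : k < Tini + N),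
      z g (k + 1) = A *ᵥ z g k
        + B *ᵥ (fun i => (hankel (Tini + N) hT ud *ᵥ g) (⟨k, hk⟩, i)) := by
    intro g k hk
    funext r
    have hterm : ∀ j : Fin (T - (Tini + N) + 1),
        Xd ((k + 1) + (j : ℕ)) = A *ᵥ Xd (k + (j : ℕ)) + B *ᵥ Ud (k + (j : ℕ)) := by
      intro j
      rw [show (k + 1) + (j : ℕ) = (k + (j : ℕ)) + 1 by omega]
      exact hrec _ (by have hj := j.isLt; omega)
    have e1 : (A *ᵥ z g k) r
        = ∑ j : Fin (T - (Tini + N) + 1), g j * (A *ᵥ Xd (k + (j : ℕ))) r := by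
      simp only [hzDef, Matrix.mulVec, dotProduct, Finset.mul_sum]
      rw [Finset.sum_comm]
      exact Finset.sum_congr rfl fun j _ => Finset.sum_congr rfl fun c _ => by ring
    have e2 : (B *ᵥ (fun i => (hankel (Tini + N) hT ud *ᵥ g) (⟨k, hk⟩, i))) r
        = ∑ j : Fin (T - (Tini + N) + 1), g j * (B *ᵥ Ud (k + (j : ℕ))) r := by
      have hfn : (fun i => (hankel (Tini + N) hT ud *ᵥ g) (⟨k, hk⟩, i))
          = fun i => ∑ j : Fin (T - (Tini + N) + 1), g j * Ud (k + (j : ℕ)) i :=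
        funext fun i => hHu g ⟨k, hk⟩ i
      rw [hfn]
      simp only [Matrix.mulVec, dotProduct, Finset.mul_sum]
      rw [Finset.sum_comm]
      exact Finset.sum_congr rfl fun j _ => Finset.sum_congr rfl fun i _ => by ring
    have e0 : z g (k + 1) r
        = ∑ j : Fin (T - (Tini + N) + 1),
            (g j * (A *ᵥ Xd (k + (j : ℕ))) r + g j * (B *ᵥ Ud (k + (j : ℕ))) r) := by
      simp only [hzDef]
      refine Finset.sum_congr rfl fun j _ => ?_
      rw [hterm j]
      simp [mul_add]
    rw [Pi.add_apply, e0, Finset.sum_add_distrib, e1, e2]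
  have hz2 : ∀ (g : Fin (T - (Tini + N) + 1) → ℝ) (k : ℕ) (hk : k < Tini + N),
      (fun i => (hankel (Tini + N) hT yd *ᵥ g) (⟨k, hk⟩, i))
        = C *ᵥ z g k + D *ᵥ (fun i => (hankel (Tini + N) hT ud *ᵥ g) (⟨k, hk⟩, i)) := by
    intro g k hk
    funext q
    have hterm : ∀ j : Fin (T - (Tini + N) + 1),
        Yd (k + (j : ℕ)) = C *ᵥ Xd (k + (j : ℕ)) + D *ᵥ Ud (k + (j : ℕ)) := by
      intro j
      exact hout _ (by have hj := j.isLt; omega)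
    have e1 : (C *ᵥ z g k) q
        = ∑ j : Fin (T - (Tini + N) + 1), g j * (C *ᵥ Xd (k + (j : ℕ))) q := by
      simp only [hzDef, Matrix.mulVec, dotProduct, Finset.mul_sum]
      rw [Finset.sum_comm]
      exact Finset.sum_congr rfl fun j _ => Finset.sum_congr rfl fun c _ => by ring
    have e2 : (D *ᵥ (fun i => (hankel (Tini + N) hT ud *ᵥ g) (⟨k, hk⟩, i))) q
        = ∑ j : Fin (T - (Tini + N) + 1), g j * (D *ᵥ Ud (k + (j : ℕ))) q := by
      have hfn : (fun i => (hankel (Tini + N) hT ud *ᵥ g) (⟨k, hk⟩, i))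
          = fun i => ∑ j : Fin (T - (Tini + N) + 1), g j * Ud (k + (j : ℕ)) i :=
        funext fun i => hHu g ⟨k, hk⟩ i
      rw [hfn]
      simp only [Matrix.mulVec, dotProduct, Finset.mul_sum]
      rw [Finset.sum_comm]
      exact Finset.sum_congr rfl fun j _ => Finset.sum_congr rfl fun i _ => by ring
    have e0 : (hankel (Tini + N) hT yd *ᵥ g) (⟨k, hk⟩, q)
        = ∑ j : Fin (T - (Tini + N) + 1),
            (g j * (C *ᵥ Xd (k + (j : ℕ))) q + g j * (D *ᵥ Ud (k + (j : ℕ))) q) := by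
      rw [hHy]
      refine Finset.sum_congr rfl fun j _ => ?_
      rw [hterm j]
      simp [mul_add]
    rw [Pi.add_apply]
    show (hankel (Tini + N) hT yd *ᵥ g) (⟨k, hk⟩, q) = _
    rw [e0, Finset.sum_add_distrib, e1, e2]
  have traj_of_g : ∀ g : Fin (T - (Tini + N) + 1) → ℝ, IsTrajectory A B C D
      (fun (k : Fin (Tini + N)) i => (hankel (Tini + N) hT ud *ᵥ g) (k, i))
      (fun (k : Fin (Tini + N)) i => (hankel (Tini + N) hT yd *ᵥ g) (k, i)) := by
    intro g
    refine ⟨fun k => z g (k : ℕ), fun k => ⟨?_, ?_⟩⟩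
    · exact hz1 g (k : ℕ) k.isLt
    · exact hz2 g (k : ℕ) k.isLt
  -- persistency of excitation, ℕ-form
  have hPEn : ∀ v : ℕ → Fin m → ℝ,
      (∀ j, j ≤ T - (Tini + N + n) →
        ∑ s ∈ Finset.range (Tini + N + n), v s ⬝ᵥ Ud (j + s) = 0) →
      ∀ s, s < Tini + N + n → v s = 0 := by
    intro v hv s hs
    have hcard : (hankel (Tini + N + n) hTpe ud).rank
        = Fintype.card (Fin (Tini + N + n) × Fin m) := by
      rw [hPE]; simp [Fintype.card_prod]; ring
    have hker := aux_leftker _ hcard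
    have hz0 : (fun si : Fin (Tini + N + n) × Fin m => v si.1 si.2) ᵥ* hankel (Tini + N + n) hTpe ud = 0 := by
      funext jf
      show (∑ si : Fin (Tini + N + n) × Fin m,
        v si.1 si.2 * hankel (Tini + N + n) hTpe ud si jf) = 0
      rw [Fintype.sum_prod_type]
      have hv2 := hv (jf : ℕ) (by have := jf.isLt; omega)
      rw [← Fin.sum_univ_eq_sum_range (fun s => v s ⬝ᵥ Ud ((jf : ℕ) + s)) (Tini + N + n)] at hv2
      rw [← hv2]
      refine Finset.sum_congr rfl fun k _ => ?_
      show (∑ i, v (k : ℕ) i * hankel (Tini + N + n) hTpe ud (k, i) jf)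
        = ∑ i, v (k : ℕ) i * Ud ((jf : ℕ) + (k : ℕ)) i
      refine Finset.sum_congr rfl fun i _ => ?_
      rw [show (jf : ℕ) + (k : ℕ) = (k : ℕ) + (jf : ℕ) from by omega,
        hUd ((k : ℕ) + (jf : ℕ)) (by have h1 := jf.isLt; have h2 := k.isLt; omega)]
      rfl
    have hv0 := hker _ hz0
    funext i
    exact congrFun hv0 ((⟨s, hs⟩ : Fin (Tini + N + n)), i)
  
  -- state evolution formula
  have evol : ∀ τ j, j + τ ≤ T →
      Xd (j + τ) = (A ^ τ) *ᵥ Xd j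
        + ∑ s ∈ Finset.range τ, (A ^ (τ - 1 - s) * B) *ᵥ Ud (j + s) := by
    intro τ
    induction τ with
    | zero => intro j hj; simp
    | succ τ ih =>
      intro j hj
      rw [show j + (τ + 1) = (j + τ) + 1 by omega, hrec (j + τ) (by omega), ih j (by omega)]
      rw [Finset.sum_range_succ, Matrix.mulVec_add, Matrix.mulVec_mulVec, ← pow_succ',
        aux_mulVec_sum]
      have e : ∀ s ∈ Finset.range τ,
          A *ᵥ ((A ^ (τ - 1 - s) * B) *ᵥ Ud (j + s)) = (A ^ (τ + 1 - 1 - s) * B) *ᵥ Ud (j + s) := by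
        intro s hs
        rw [Finset.mem_range] at hs
        rw [Matrix.mulVec_mulVec, ← Matrix.mul_assoc, ← pow_succ',
          show τ - 1 - s + 1 = τ + 1 - 1 - s by omega]
      rw [Finset.sum_congr rfl e, show τ + 1 - 1 - τ = 0 by omega, pow_zero, Matrix.one_mul]
      abel
  -- the core left-annihilator argument
  have core : ∀ (η : ℕ → Fin m → ℝ) (ξ : Fin n → ℝ),
      (∀ s, Tini + N ≤ s → η s = 0) →
      (∀ j, j ≤ T - (Tini + N) →
        (∑ s ∈ Finset.range (Tini + N), η s ⬝ᵥ Ud (j + s)) + ξ ⬝ᵥ Xd j = 0) →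
      (∀ s, η s = 0) ∧ ξ = 0 := by
    intro η ξ hηz hann
    obtain ⟨c, hc⟩ := aux_cayley A
    set ψ : ℕ → ℕ → Fin m → ℝ :=
      fun τ s => if s < τ then ξ ᵥ* (A ^ (τ - 1 - s) * B) else η (s - τ) with hψDef
    have claim1 : ∀ τ, τ ≤ n → ∀ j, j ≤ T - (Tini + N + n) →
        ∑ s ∈ Finset.range (Tini + N + n), ψ τ s ⬝ᵥ Ud (j + s)
          = -((ξ ᵥ* (A ^ τ)) ⬝ᵥ Xd j) := by
      intro τ hτ j hj
      rw [← Finset.sum_range_add_sum_Ico _ (show τ ≤ Tini + N + n by omega)]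
      have part1 : ∑ s ∈ Finset.range τ, ψ τ s ⬝ᵥ Ud (j + s)
          = ξ ⬝ᵥ Xd (j + τ) - ξ ⬝ᵥ ((A ^ τ) *ᵥ Xd j) := by
        have e : ∀ s ∈ Finset.range τ,
            ψ τ s ⬝ᵥ Ud (j + s) = ξ ⬝ᵥ ((A ^ (τ - 1 - s) * B) *ᵥ Ud (j + s)) := by
          intro s hs
          rw [Finset.mem_range] at hs
          show (if s < τ then ξ ᵥ* (A ^ (τ - 1 - s) * B) else η (s - τ)) ⬝ᵥ Ud (j + s) = _
          rw [if_pos hs, ← Matrix.dotProduct_mulVec]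
        rw [Finset.sum_congr rfl e, ← aux_dot_sum]
        have hS : ∑ s ∈ Finset.range τ, (A ^ (τ - 1 - s) * B) *ᵥ Ud (j + s)
            = Xd (j + τ) - (A ^ τ) *ᵥ Xd j :=
          eq_sub_of_add_eq' (evol τ j (by omega)).symm
        rw [hS, dotProduct_sub]
      have part2 : ∑ s ∈ Finset.Ico τ (Tini + N + n), ψ τ s ⬝ᵥ Ud (j + s)
          = -(ξ ⬝ᵥ Xd (j + τ)) := by
        rw [Finset.sum_Ico_eq_sum_range]
        have e : ∀ t ∈ Finset.range (Tini + N + n - τ),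
            ψ τ (τ + t) ⬝ᵥ Ud (j + (τ + t)) = η t ⬝ᵥ Ud ((j + τ) + t) := by
          intro t ht
          show (if τ + t < τ then ξ ᵥ* (A ^ (τ - 1 - (τ + t)) * B) else η (τ + t - τ)) ⬝ᵥ _ = _
          rw [if_neg (by omega), show τ + t - τ = t by omega,
            show j + (τ + t) = (j + τ) + t by omega]
        rw [Finset.sum_congr rfl e,
          ← Finset.sum_range_add_sum_Ico _ (show Tini + N ≤ Tini + N + n - τ by omega)]
        have e2 : ∑ t ∈ Finset.Ico (Tini + N) (Tini + N + n - τ), η t ⬝ᵥ Ud ((j + τ) + t) = 0 := by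
          refine Finset.sum_eq_zero fun t ht => ?_
          rw [Finset.mem_Ico] at ht
          rw [hηz t (by omega), zero_dotProduct]
        rw [e2, add_zero]
        exact eq_neg_of_add_eq_zero_left (hann (j + τ) (by omega))
      rw [part1, part2, Matrix.dotProduct_mulVec]
      ring
    have claim3 : ∀ j, j ≤ T - (Tini + N + n) →
        ∑ s ∈ Finset.range (Tini + N + n),
          (ψ n s - ∑ τ ∈ Finset.range n, c τ • ψ τ s) ⬝ᵥ Ud (j + s) = 0 := by
      intro j hj
      have e1 : ∀ s ∈ Finset.range (Tini + N + n),
          (ψ n s - ∑ τ ∈ Finset.range n, c τ • ψ τ s) ⬝ᵥ Ud (j + s)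
            = ψ n s ⬝ᵥ Ud (j + s) - ∑ τ ∈ Finset.range n, c τ * (ψ τ s ⬝ᵥ Ud (j + s)) := by
        intro s _
        rw [sub_dotProduct, aux_sum_dot]
        congr 1
        exact Finset.sum_congr rfl fun τ _ => by rw [smul_dotProduct]; rfl
      rw [Finset.sum_congr rfl e1, Finset.sum_sub_distrib, claim1 n le_rfl j hj,
        Finset.sum_comm]
      have e2 : ∀ τ ∈ Finset.range n,
          ∑ s ∈ Finset.range (Tini + N + n), c τ * (ψ τ s ⬝ᵥ Ud (j + s))
            = c τ * -((ξ ᵥ* A ^ τ) ⬝ᵥ Xd j) := by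
        intro τ hτ
        rw [Finset.mem_range] at hτ
        rw [← Finset.mul_sum, claim1 τ (le_of_lt hτ) j hj]
      rw [Finset.sum_congr rfl e2]
      have e3 : (ξ ᵥ* A ^ n) ⬝ᵥ Xd j
          = ∑ τ ∈ Finset.range n, c τ * ((ξ ᵥ* A ^ τ) ⬝ᵥ Xd j) := by
        rw [← Matrix.dotProduct_mulVec, hc, aux_sum_mulVec, aux_dot_sum]
        refine Finset.sum_congr rfl fun τ _ => ?_
        rw [Matrix.smul_mulVec, dotProduct_smul, Matrix.dotProduct_mulVec]
        rfl
      have e4 : ∑ τ ∈ Finset.range n, c τ * -((ξ ᵥ* A ^ τ) ⬝ᵥ Xd j)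
          = -∑ τ ∈ Finset.range n, c τ * ((ξ ᵥ* A ^ τ) ⬝ᵥ Xd j) := by
        rw [← Finset.sum_neg_distrib]
        exact Finset.sum_congr rfl fun τ _ => mul_neg _ _
      rw [e4, e3]
      ring
    have hΨ0 : ∀ s, s < Tini + N + n →
        ψ n s - ∑ τ ∈ Finset.range n, c τ • ψ τ s = 0 :=
      hPEn (fun s => ψ n s - ∑ τ ∈ Finset.range n, c τ • ψ τ s)
        (fun j hj => claim3 j hj)
    have ηzero : ∀ s, η s = 0 := by
      have key : ∀ d t, Tini + N ≤ t + d → η t = 0 := by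
        intro d
        induction d with
        | zero => exact fun t ht => hηz t (by omega)
        | succ d ih =>
          intro t ht
          by_cases h2 : Tini + N ≤ t + d
          · exact ih t h2
          · have h4 := hΨ0 (n + t) (by omega)
            have h5 : ψ n (n + t) = η t := by
              show (if n + t < n then _ else η (n + t - n)) = η t
              rw [if_neg (by omega), show n + t - n = t by omega]
            have h6 : ∀ τ ∈ Finset.range n, c τ • ψ τ (n + t) = 0 := by
              intro τ hτ
              rw [Finset.mem_range] at hτ
              show c τ • (if n + t < τ then _ else η (n + t - τ)) = 0
              rw [if_neg (by omega), ih (n + t - τ) (by omega), smul_zero]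
            rw [h5, Finset.sum_eq_zero h6, sub_zero] at h4
            exact h4
      exact fun t => key (Tini + N) t (by omega)
    have Qzero : ∀ k, k < n → ξ ᵥ* (A ^ k * B) = 0 := by
      intro k
      induction k using Nat.strong_induction_on with
      | _ k ih =>
        intro hk
        have h4 := hΨ0 (n - 1 - k) (by omega)
        have h5 : ψ n (n - 1 - k) = ξ ᵥ* (A ^ k * B) := by
          show (if n - 1 - k < n then ξ ᵥ* (A ^ (n - 1 - (n - 1 - k)) * B) else _) = _
          rw [if_pos (by omega), show n - 1 - (n - 1 - k) = k by omega]
        have h6 : ∀ τ ∈ Finset.range n, c τ • ψ τ (n - 1 - k) = 0 := by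
          intro τ hτ
          rw [Finset.mem_range] at hτ
          show c τ • (if n - 1 - k < τ then ξ ᵥ* (A ^ (τ - 1 - (n - 1 - k)) * B)
            else η (n - 1 - k - τ)) = 0
          by_cases hsτ : n - 1 - k < τ
          · rw [if_pos hsτ, ih (τ - 1 - (n - 1 - k)) (by omega) (by omega), smul_zero]
          · rw [if_neg hsτ, ηzero, smul_zero]
        rw [h5, Finset.sum_eq_zero h6, sub_zero] at h4
        exact h4
    have hξM : ξ ᵥ* ctrbMat A B = 0 := by
      funext kj
      show (ξ ᵥ* (A ^ (kj.1 : ℕ) * B)) kj.2 = 0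
      rw [Qzero (kj.1 : ℕ) kj.1.isLt]
      rfl
    have ξzero : ξ = 0 :=
      aux_leftker (ctrbMat A B) (by rw [Fintype.card_fin]; exact hctrb) ξ hξM
    exact ⟨ηzero, ξzero⟩
  
  -- the combined matrix col(H_L(ud), X)
  set Mfull : Matrix ((Fin (Tini + N) × Fin m) ⊕ Fin n) (Fin (T - (Tini + N) + 1)) ℝ :=
    Matrix.of (Sum.elim (fun ki (j : Fin (T - (Tini + N) + 1)) => Ud ((ki.1 : ℕ) + (j : ℕ)) ki.2)
      (fun r (j : Fin (T - (Tini + N) + 1)) => Xd (j : ℕ) r)) with hMfullDef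
  have hMker : ∀ v : ((Fin (Tini + N) × Fin m) ⊕ Fin n) → ℝ, v ᵥ* Mfull = 0 → v = 0 := by
    intro v hv
    set ηe : ℕ → Fin m → ℝ :=
      fun s => if h : s < Tini + N then (fun i => v (Sum.inl (⟨s, h⟩, i))) else 0 with hηeDef
    have hannv : ∀ j, j ≤ T - (Tini + N) →
        (∑ s ∈ Finset.range (Tini + N), ηe s ⬝ᵥ Ud (j + s))
          + (fun r => v (Sum.inr r)) ⬝ᵥ Xd j = 0 := by
      intro j hj
      have h8 := congrFun hv (⟨j, by omega⟩ : Fin (T - (Tini + N) + 1))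
      have h9 : (v ᵥ* Mfull) (⟨j, by omega⟩ : Fin (T - (Tini + N) + 1))
          = (∑ s ∈ Finset.range (Tini + N), ηe s ⬝ᵥ Ud (j + s))
            + (fun r => v (Sum.inr r)) ⬝ᵥ Xd j := by
        show (∑ rr : (Fin (Tini + N) × Fin m) ⊕ Fin n,
          v rr * Mfull rr (⟨j, by omega⟩ : Fin (T - (Tini + N) + 1))) = _
        rw [Fintype.sum_sum_type]
        congr 1
        · rw [Fintype.sum_prod_type,
            ← Fin.sum_univ_eq_sum_range (fun s => ηe s ⬝ᵥ Ud (j + s)) (Tini + N)]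
          refine Finset.sum_congr rfl fun k _ => ?_
          show _ = ∑ i, ηe (k : ℕ) i * Ud (j + (k : ℕ)) i
          refine Finset.sum_congr rfl fun i _ => ?_
          show v (Sum.inl (k, i)) * Ud ((k : ℕ) + j) i = ηe (k : ℕ) i * Ud (j + (k : ℕ)) i
          rw [show (k : ℕ) + j = j + (k : ℕ) by omega]
          congr 1
          simp only [hηeDef]
          rw [dif_pos k.isLt]
      rw [h9] at h8
      exact h8
    obtain ⟨hη0, hξ0⟩ := core ηe (fun r => v (Sum.inr r))
      (fun s hs => by simp only [hηeDef]; rw [dif_neg (by omega)]) hannv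
    funext rr
    cases rr with
    | inl ki =>
      have h10 := congrFun (hη0 (ki.1 : ℕ)) ki.2
      simp only [hηeDef] at h10
      rw [dif_pos ki.1.isLt] at h10
      simpa using h10
    | inr r => exact congrFun hξ0 r
  have hsurj := aux_surj Mfull hMker
  constructor
  · rintro ⟨x, hx⟩
    obtain ⟨g, hg⟩ := hsurj (Sum.elim (fun ki => catSeq uini u ki.1 ki.2) (x 0))
    have hgu : ∀ (k : Fin (Tini + N)) (i : Fin m),
        (hankel (Tini + N) hT ud *ᵥ g) (k, i) = catSeq uini u k i := by
      intro k i
      have h10 := congrFun hg (Sum.inl (k, i))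
      rw [hHu g k i]
      have h11 : (Mfull *ᵥ g) (Sum.inl (k, i))
          = ∑ j : Fin (T - (Tini + N) + 1), g j * Ud ((k : ℕ) + (j : ℕ)) i := by
        show (∑ j, Mfull (Sum.inl (k, i)) j * g j) = _
        exact Finset.sum_congr rfl fun j _ => by
          show Ud ((k : ℕ) + (j : ℕ)) i * g j = _
          ring
      rw [h11] at h10
      exact h10
    have hgx : z g 0 = x 0 := by
      funext r
      have h11 := congrFun hg (Sum.inr r)
      have h12 : (Mfull *ᵥ g) (Sum.inr r) = z g 0 r := by
        show (∑ j, Mfull (Sum.inr r) j * g j) = _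
        simp only [hzDef]
        exact Finset.sum_congr rfl fun j _ => by
          show Xd (j : ℕ) r * g j = g j * Xd (0 + (j : ℕ)) r
          rw [Nat.zero_add]
          ring
      rw [h12] at h11
      exact h11.trans rfl
    have hzx : ∀ k (hk : k ≤ Tini + N), z g k = x ⟨k, by omega⟩ := by
      intro k
      induction k with
      | zero =>
        intro hk
        have h0 : (⟨0, by omega⟩ : Fin (Tini + N + 1)) = 0 := Fin.ext (by simp)
        rw [h0]
        exact hgx
      | succ k ih =>
        intro hk
        have hkL : k < Tini + N := by omega
        have h12 := hz1 g k hkL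
        have h13 := (hx ⟨k, hkL⟩).1
        have hB : (fun i => (hankel (Tini + N) hT ud *ᵥ g) (⟨k, hkL⟩, i))
            = catSeq uini u ⟨k, hkL⟩ := funext fun i => hgu ⟨k, hkL⟩ i
        rw [ih (by omega), hB] at h12
        exact h12.trans h13.symm
    have hgy : ∀ (k : Fin (Tini + N)) (i : Fin p),
        (hankel (Tini + N) hT yd *ᵥ g) (k, i) = catSeq yini y k i := by
      intro k i
      have h14 := hz2 g (k : ℕ) k.isLt
      have hB : (fun i => (hankel (Tini + N) hT ud *ᵥ g) (⟨(k : ℕ), k.isLt⟩, i))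
          = catSeq uini u k := funext fun i => hgu k i
      rw [hB, hzx (k : ℕ) (le_of_lt k.isLt)] at h14
      have h15 := (hx k).2
      have h16 : (fun i => (hankel (Tini + N) hT yd *ᵥ g) (⟨(k : ℕ), k.isLt⟩, i))
          = catSeq yini y k := h14.trans h15.symm
      exact congrFun h16 i
    refine ⟨g, fun k i => ?_, fun k i => ?_, fun k i => ?_, fun k i => ?_⟩
    · exact (hgu ⟨(k : ℕ), by omega⟩ i).trans (congrFun (dif_pos k.isLt) i)
    · exact (hgy ⟨(k : ℕ), by omega⟩ i).trans (congrFun (dif_pos k.isLt) i)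
    · refine (hgu ⟨Tini + (k : ℕ), by omega⟩ i).trans ?_
      refine (congrFun (dif_neg (show ¬ Tini + (k : ℕ) < Tini by omega)) i).trans ?_
      exact congrFun (congrArg u (Fin.ext
        (show Tini + (k : ℕ) - Tini = (k : ℕ) by omega))) i
    · refine (hgy ⟨Tini + (k : ℕ), by omega⟩ i).trans ?_
      refine (congrFun (dif_neg (show ¬ Tini + (k : ℕ) < Tini by omega)) i).trans ?_
      exact congrFun (congrArg y (Fin.ext
        (show Tini + (k : ℕ) - Tini = (k : ℕ) by omega))) i
  · rintro ⟨g, h1, h2, h3, h4⟩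
    have hu' : (fun (k : Fin (Tini + N)) i => (hankel (Tini + N) hT ud *ᵥ g) (k, i))
        = catSeq uini u := by
      funext k i
      by_cases hk : (k : ℕ) < Tini
      · have h5 := h1 ⟨(k : ℕ), hk⟩ i
        show (hankel (Tini + N) hT ud *ᵥ g) (k, i) = _
        simp only [catSeq]
        rw [dif_pos hk]
        exact h5
      · have hk2 : (k : ℕ) - Tini < N := by have := k.isLt; omega
        have h5 := h3 ⟨(k : ℕ) - Tini, hk2⟩ i
        have hfin : (⟨Tini + ((k : ℕ) - Tini), by have := k.isLt; omega⟩
            : Fin (Tini + N)) = k := Fin.ext (show Tini + ((k : ℕ) - Tini) = (k : ℕ) by omega)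
        rw [hfin] at h5
        show (hankel (Tini + N) hT ud *ᵥ g) (k, i) = _
        simp only [catSeq]
        rw [dif_neg hk]
        exact h5
    have hy' : (fun (k : Fin (Tini + N)) i => (hankel (Tini + N) hT yd *ᵥ g) (k, i))
        = catSeq yini y := by
      funext k i
      by_cases hk : (k : ℕ) < Tini
      · have h5 := h2 ⟨(k : ℕ), hk⟩ i
        show (hankel (Tini + N) hT yd *ᵥ g) (k, i) = _
        simp only [catSeq]
        rw [dif_pos hk]
        exact h5
      · have hk2 : (k : ℕ) - Tini < N := by have := k.isLt; omega
        have h5 := h4 ⟨(k : ℕ) - Tini, hk2⟩ i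
        have hfin : (⟨Tini + ((k : ℕ) - Tini), by have := k.isLt; omega⟩
            : Fin (Tini + N)) = k := Fin.ext (show Tini + ((k : ℕ) - Tini) = (k : ℕ) by omega)
        rw [hfin] at h5
        show (hankel (Tini + N) hT yd *ᵥ g) (k, i) = _
        simp only [catSeq]
        rw [dif_neg hk]
        exact h5
    have htg := traj_of_g g
    rw [hu', hy'] at htg
    exact htg
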